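/- Let Φ = (Φ₀,Φ_r) : ℝ^n → ℝ × ℝ^m be continuous at x̄, and suppose Φ(x̄) ∈ bd(Q)\{0}, i.e., ‖Φ_r(x̄)‖ = Φ₀(x̄) > 0. Define ψ : ℝ^{m+1} → ℝ² by ψ(s₀,s_r) = (‖s_r‖² − s₀², −s₀). Then with c := (√2·Φ₀(x̄))⁻¹ there exists a neighborhood U of x̄ such that dist(Φ(x); Q) ≤ c·dist(ψ(Φ(x)); ℝ²₋) for all x ∈ U, where ℝ²₋ = (−∞,0]². -/

import Mathlib

open scoped RealInnerProductSpace Pointwise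
open Filter Topology Metric Set Classical

noncomputable section

abbrev Em (m : ℕ) := WithLp 2 (ℝ × EuclideanSpace ℝ (Fin m))

namespace SOC

def mk2 {α β : Type*} (a : α) (b : β) : WithLp 2 (α × β) := (WithLp.equiv 2 (α × β)).symm (a, b)

def Q (m : ℕ) : Set (Em m) := {s | ‖s.ofLp.2‖ ≤ s.ofLp.1}

variable {H : Type*} [NormedAddCommGroup H] [InnerProductSpace ℝ H]

def normalCone (C : Set H) (x : H) : Set H :=
  {y | x ∈ C ∧ ∀ z ∈ C, ⟪y, z - x⟫ ≤ 0}

def tangentCone (Ω : Set H) (z : H) : Set H :=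
  {w | ∃ t : ℕ → ℝ, ∃ wk : ℕ → H, (∀ k, 0 < t k) ∧ Tendsto t atTop (𝓝 0) ∧
    Tendsto wk atTop (𝓝 w) ∧ ∀ k, z + t k • wk k ∈ Ω}

def regularNormalCone (Ω : Set H) (z : H) : Set H :=
  {v | z ∈ Ω ∧ ∀ ε > 0, ∀ᶠ w in 𝓝[Ω \ {z}] z, ⟪v, w - z⟫ ≤ ε * ‖w - z‖}

def limitingNormalCone (Ω : Set H) (z : H) : Set H :=
  {v | ∃ zk : ℕ → H, ∃ vk : ℕ → H, (∀ k, vk k ∈ regularNormalCone Ω (zk k)) ∧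
    Tendsto zk atTop (𝓝 z) ∧ Tendsto vk atTop (𝓝 v)}

variable {n m : ℕ}

/-- The constraint set `Γ = {x | Φ(x) ∈ Q}`. -/
def Gamma (Φ : EuclideanSpace ℝ (Fin n) → Em m) : Set (EuclideanSpace ℝ (Fin n)) :=
  {x | Φ x ∈ Q m}

/-- Metric subregularity constraint qualification with modulus `κ`. -/
def MSCQmod (Φ : EuclideanSpace ℝ (Fin n) → Em m) (xb : EuclideanSpace ℝ (Fin n)) (κ : ℝ) : Prop :=
  ∃ U ∈ 𝓝 xb, ∀ x ∈ U, infDist x (Gamma Φ) ≤ κ * infDist (Φ x) (Q m)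

def MSCQ (Φ : EuclideanSpace ℝ (Fin n) → Em m) (xb : EuclideanSpace ℝ (Fin n)) : Prop :=
  ∃ κ > 0, MSCQmod Φ xb κ

/-- Lagrange multiplier set `Λ(x,x*)`. -/
def Lambda (Φ : EuclideanSpace ℝ (Fin n) → Em m) (x xs : EuclideanSpace ℝ (Fin n)) : Set (Em m) :=
  {lam | lam ∈ normalCone (Q m) (Φ x) ∧ ContinuousLinearMap.adjoint (fderiv ℝ Φ x) lam = xs}

/-- Critical cone `K(x,x*) = T_Γ(x) ∩ {x*}^⊥`. -/
def Kcone (Φ : EuclideanSpace ℝ (Fin n) → Em m) (x xs : EuclideanSpace ℝ (Fin n)) :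
    Set (EuclideanSpace ℝ (Fin n)) :=
  tangentCone (Gamma Φ) x ∩ {v | ⟪xs, v⟫ = 0}

/-- `x ↦ Φ̂(x) = (−Φ₀(x), Φ_r(x))`. -/
def hatFun (Φ : EuclideanSpace ℝ (Fin n) → Em m) (x : EuclideanSpace ℝ (Fin n)) : Em m :=
  mk2 (-(Φ x).ofLp.1) (Φ x).ofLp.2

/-- Hessian of `x ↦ ⟨λ, Φ(x)⟩` at `x`, as a linear map (derivative of the gradient). -/
def hessLam (Φ : EuclideanSpace ℝ (Fin n) → Em m) (x : EuclideanSpace ℝ (Fin n)) (lam : Em m) :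
    EuclideanSpace ℝ (Fin n) →L[ℝ] EuclideanSpace ℝ (Fin n) :=
  fderiv ℝ (fun y => ContinuousLinearMap.adjoint (fderiv ℝ Φ y) lam) x

/-- The curvature term `H(x;λ)`. -/

def Hmap (Φ : EuclideanSpace ℝ (Fin n) → Em m) (x : EuclideanSpace ℝ (Fin n)) (lam : Em m) :
    EuclideanSpace ℝ (Fin n) →L[ℝ] EuclideanSpace ℝ (Fin n) :=
  if Φ x ∈ frontier (Q m) \ {0} then
    (-(lam.ofLp.1 / (Φ x).ofLp.1)) •
      ((ContinuousLinearMap.adjoint (fderiv ℝ (hatFun Φ) x)).comp (fderiv ℝ Φ x))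
  else 0

/-- `∇²⟨λ,Φ⟩(x) + H(x;λ)`. -/
def Gmap (Φ : EuclideanSpace ℝ (Fin n) → Em m) (x : EuclideanSpace ℝ (Fin n)) (lam : Em m) :
    EuclideanSpace ℝ (Fin n) →L[ℝ] EuclideanSpace ℝ (Fin n) :=
  hessLam Φ x lam + Hmap Φ x lam

/-- `Λ(x,x*;v)`: minimizers of `λ ↦ −⟨v, (∇²⟨λ,Φ⟩(x)+H(x;λ))v⟩` over `Λ(x,x*)`. -/
def LambdaV (Φ : EuclideanSpace ℝ (Fin n) → Em m) (x xs v : EuclideanSpace ℝ (Fin n)) :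
    Set (Em m) :=
  {lam ∈ Lambda Φ x xs | ∀ mu ∈ Lambda Φ x xs,
    -⟪v, Gmap Φ x lam v⟫ ≤ -⟪v, Gmap Φ x mu v⟫}

/-- Graph of the limiting normal cone mapping `N_Γ`, inside `ℝ^n × ℝ^n` with the ℓ² norm. -/
def gphNGamma (Φ : EuclideanSpace ℝ (Fin n) → Em m) :
    Set (WithLp 2 (EuclideanSpace ℝ (Fin n) × EuclideanSpace ℝ (Fin n))) :=
  {p | p.ofLp.2 ∈ limitingNormalCone (Gamma Φ) p.ofLp.1}

/-- Second derivative `D²Φ(x)[v,v]`. -/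
def D2 (Φ : EuclideanSpace ℝ (Fin n) → Em m) (x v : EuclideanSpace ℝ (Fin n)) : Em m :=
  fderiv ℝ (fderiv ℝ Φ) x v v

end SOC

namespace SOC

/-- The reduction mapping `ψ(s₀,s_r) = (‖s_r‖² − s₀², −s₀)`, with values in `ℝ²`
equipped with the Euclidean norm. -/
def psi {m : ℕ} (s : Em m) : WithLp 2 (ℝ × ℝ) :=
  mk2 (‖s.ofLp.2‖ ^ 2 - s.ofLp.1 ^ 2) (-s.ofLp.1)

/-- The nonpositive orthant `ℝ²₋ = (−∞,0]²`. -/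
def R2minus : Set (WithLp 2 (ℝ × ℝ)) := {p | p.ofLp.1 ≤ 0 ∧ p.ofLp.2 ≤ 0}

end SOC

lemma aux_le_infDist {α : Type*} [PseudoMetricSpace α] {s : Set α} {x : α} {c : ℝ}
    (hs : s.Nonempty) (h : ∀ y ∈ s, c ≤ dist x y) : c ≤ Metric.infDist x s := by
  rcases le_or_gt c 0 with h0 | h0
  · exact h0.trans Metric.infDist_nonneg
  · rw [Metric.infDist, ← ENNReal.toReal_ofReal h0.le]
    refine ENNReal.toReal_mono (Metric.infEdist_ne_top hs) ?_
    rw [EMetric.le_infEdist]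
    intro y hy
    rw [edist_dist]
    exact ENNReal.ofReal_le_ofReal (h y hy)

open SOC in
/-- Estimate (4.16): near a point where `Φ(x̄) ∈ bd(Q)\{0}`, the distance to `Q` is
bounded by `c = (√2·Φ₀(x̄))⁻¹` times the distance of `ψ(Φ(x))` to `ℝ²₋`. -/
theorem dist_to_Q_le_dist_psi_near_nonzero_boundary
    {n m : ℕ} (Φ : EuclideanSpace ℝ (Fin n) → Em m)
    (xb : EuclideanSpace ℝ (Fin n)) (hc : ContinuousAt Φ xb)
    (hbd : ‖(Φ xb).ofLp.2‖ = (Φ xb).ofLp.1) (hpos : 0 < (Φ xb).ofLp.1) :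
    ∃ U ∈ nhds xb, ∀ x ∈ U,
      Metric.infDist (Φ x) (Q m) ≤
        (Real.sqrt 2 * (Φ xb).ofLp.1)⁻¹ * Metric.infDist (psi (Φ x)) R2minus := by
  set t := (Φ xb).ofLp.1 with ht
  have hsqrt2 : (0:ℝ) < Real.sqrt 2 := Real.sqrt_pos.mpr (by norm_num)
  have hsq2 : Real.sqrt 2 ^ 2 = 2 := Real.sq_sqrt (by norm_num)
  have hcinv : (0:ℝ) < (Real.sqrt 2 * t)⁻¹ := by positivity
  -- continuity of x ↦ Φ₀(x) + ‖Φ_r(x)‖ at xb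
  have h1 : Continuous fun s : Em m => s.ofLp.1 :=
    continuous_fst.comp (WithLp.prod_continuous_ofLp 2 ℝ (EuclideanSpace ℝ (Fin m)))
  have h2 : Continuous fun s : Em m => ‖s.ofLp.2‖ :=
    continuous_norm.comp
      (continuous_snd.comp (WithLp.prod_continuous_ofLp 2 ℝ (EuclideanSpace ℝ (Fin m))))
  have hsum : ContinuousAt (fun x => (Φ x).ofLp.1 + ‖(Φ x).ofLp.2‖) xb :=
    (h1.continuousAt.comp hc).add (h2.continuousAt.comp hc)
  have hval : (Φ xb).ofLp.1 + ‖(Φ xb).ofLp.2‖ = 2 * t := by rw [hbd]; ring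
  have hU : {x | t < (Φ x).ofLp.1 + ‖(Φ x).ofLp.2‖} ∈ nhds xb := by
    have : Set.Ioi t ∈ nhds ((Φ xb).ofLp.1 + ‖(Φ xb).ofLp.2‖) := Ioi_mem_nhds (by rw [hval]; linarith)
    exact hsum this
  refine ⟨_, hU, fun x hx => ?_⟩
  set s₀ := (Φ x).ofLp.1 with hs0
  set r := ‖(Φ x).ofLp.2‖ with hr
  have hxs : t < s₀ + r := hx
  have hrn : 0 ≤ r := norm_nonneg _
  -- lower bound on the rhs distance
  have hRne : R2minus.Nonempty := ⟨0, le_refl (0:ℝ), le_refl (0:ℝ)⟩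
  have hpsi1 : (psi (Φ x)).ofLp.1 = r ^ 2 - s₀ ^ 2 := rfl
  have hlow : r ^ 2 - s₀ ^ 2 ≤ Metric.infDist (psi (Φ x)) R2minus := by
    refine aux_le_infDist hRne fun y hy => ?_
    have hle : r ^ 2 - s₀ ^ 2 ≤ dist (psi (Φ x)).ofLp.1 y.ofLp.1 := by
      rw [Real.dist_eq]
      have := hy.1
      rw [hpsi1] at *
      calc r ^ 2 - s₀ ^ 2 ≤ (r ^ 2 - s₀ ^ 2) - y.ofLp.1 := by linarith
        _ ≤ |(r ^ 2 - s₀ ^ 2) - y.ofLp.1| := le_abs_self _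
    calc r ^ 2 - s₀ ^ 2 ≤ dist (psi (Φ x)).ofLp.1 y.ofLp.1 := hle
      _ ≤ dist (psi (Φ x)) y := by
          rw [WithLp.prod_dist_eq_of_L2]; simp only [WithLp.fst, WithLp.snd]
          have h0 : 0 ≤ dist (psi (Φ x)).ofLp.1 y.ofLp.1 := dist_nonneg
          nlinarith [Real.sq_sqrt (by positivity :
            (0:ℝ) ≤ dist (psi (Φ x)).ofLp.1 y.ofLp.1 ^ 2 + dist (psi (Φ x)).ofLp.2 y.ofLp.2 ^ 2),
            Real.sqrt_nonneg (dist (psi (Φ x)).ofLp.1 y.ofLp.1 ^ 2 + dist (psi (Φ x)).ofLp.2 y.ofLp.2 ^ 2),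
            sq_nonneg (dist (psi (Φ x)).ofLp.2 y.ofLp.2)]
  rcases le_or_gt r s₀ with hcase | hcase
  · -- Φ x ∈ Q
    have : Metric.infDist (Φ x) (Q m) = 0 :=
      Metric.infDist_zero_of_mem (by exact hcase)
    rw [this]
    exact mul_nonneg hcinv.le Metric.infDist_nonneg
  · -- boundary case: project onto the cone
    have hrpos : 0 < r := by linarith
    set a : ℝ := (r + s₀) / 2 with ha
    have hapos : 0 < a := by
      have := hpos; simp only [ha]; linarith
    have har : a ≤ r := by simp only [ha]; linarith
    set p : Em m := mk2 a ((a / r) • (Φ x).ofLp.2) with hp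
    have hp1 : p.ofLp.1 = a := rfl
    have hp2 : p.ofLp.2 = (a / r) • (Φ x).ofLp.2 := rfl
    have hpQ : p ∈ Q m := by
      show ‖p.ofLp.2‖ ≤ p.ofLp.1
      rw [hp1, hp2, norm_smul, Real.norm_eq_abs, abs_of_pos (by positivity), ← hr]
      rw [div_mul_cancel₀ _ hrpos.ne']
    have hdist : dist (Φ x) p = Real.sqrt ((s₀ - a) ^ 2 + (r - a) ^ 2) := by
      rw [WithLp.prod_dist_eq_of_L2]; simp only [WithLp.fst, WithLp.snd]
      congr 1
      have e1 : dist (Φ x).ofLp.1 p.ofLp.1 ^ 2 = (s₀ - a) ^ 2 := by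
        rw [hp1, Real.dist_eq, sq_abs]
      have e2 : dist (Φ x).ofLp.2 p.ofLp.2 ^ 2 = (r - a) ^ 2 := by
        rw [hp2, dist_eq_norm]
        have : (Φ x).ofLp.2 - (a / r) • (Φ x).ofLp.2 = (1 - a / r) • (Φ x).ofLp.2 := by
          rw [sub_smul, one_smul]
        rw [this, norm_smul, Real.norm_eq_abs, ← hr, mul_pow, sq_abs]
        field_simp
      rw [e1, e2]
    have hkey : dist (Φ x) p ≤ (Real.sqrt 2 * t)⁻¹ * (r ^ 2 - s₀ ^ 2) := by
      rw [hdist]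
      have hrhs : 0 ≤ (Real.sqrt 2 * t)⁻¹ * (r ^ 2 - s₀ ^ 2) := by
        apply mul_nonneg hcinv.le; nlinarith
      rw [show (Real.sqrt 2 * t)⁻¹ * (r ^ 2 - s₀ ^ 2) =
          Real.sqrt (((Real.sqrt 2 * t)⁻¹ * (r ^ 2 - s₀ ^ 2)) ^ 2) from
        (Real.sqrt_sq hrhs).symm]
      apply Real.sqrt_le_sqrt
      have hts : t ^ 2 ≤ (s₀ + r) ^ 2 := by nlinarith
      have hexp : ((Real.sqrt 2 * t)⁻¹ * (r ^ 2 - s₀ ^ 2)) ^ 2 =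
          (r ^ 2 - s₀ ^ 2) ^ 2 / (2 * t ^ 2) := by
        rw [mul_pow, inv_pow, mul_pow, hsq2]
        field_simp
      rw [hexp, ha, le_div_iff₀ (by positivity : (0:ℝ) < 2 * t ^ 2)]
      calc ((s₀ - (r + s₀) / 2) ^ 2 + (r - (r + s₀) / 2) ^ 2) * (2 * t ^ 2)
          = (r - s₀) ^ 2 * t ^ 2 := by ring
        _ ≤ (r - s₀) ^ 2 * (s₀ + r) ^ 2 := mul_le_mul_of_nonneg_left hts (sq_nonneg _)
        _ = (r ^ 2 - s₀ ^ 2) ^ 2 := by ring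
    calc Metric.infDist (Φ x) (Q m) ≤ dist (Φ x) p := Metric.infDist_le_dist_of_mem hpQ
      _ ≤ (Real.sqrt 2 * t)⁻¹ * (r ^ 2 - s₀ ^ 2) := hkey
      _ ≤ (Real.sqrt 2 * t)⁻¹ * Metric.infDist (psi (Φ x)) R2minus :=
        mul_le_mul_of_nonneg_left hlow hcinv.le
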